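/- Every d-dimensional copula C satisfies κ[C] ≤ κ[C_T], where C_T is the copula of the order transform of C and κ is multivariate Kendall's tau. -/

import Mathlib

open MeasureTheory Set Filter

set_option linter.unusedSectionVars false
set_option maxHeartbeats 1000000

/-- A copula measure: a probability measure on `[0,1]^d` (viewed inside
`Fin d → ℝ`) all of whose univariate marginals are uniform on `[0,1]`. -/
def IsCopulaMeasure {d : ℕ} (μ : Measure (Fin d → ℝ)) : Prop :=
  IsProbabilityMeasure μ ∧
    ∀ i : Fin d, μ.map (fun x => x i) = volume.restrict (Set.Icc 0 1)

/-- The copula (distribution function) associated with a copula measure. -/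
noncomputable def copulaFn {d : ℕ} (μ : Measure (Fin d → ℝ)) (u : Fin d → ℝ) : ℝ :=
  (μ {x | ∀ i, x i ≤ u i}).toReal

/-- The sorting (order statistic) map: `sortVec x` is the nondecreasing
rearrangement of the vector `x`. -/
noncomputable def sortVec {d : ℕ} (x : Fin d → ℝ) : Fin d → ℝ :=
  x ∘ Tuple.sort x

/-- The `i`-th univariate marginal distribution function of a measure on
`Fin d → ℝ`. -/
noncomputable def margCDF {d : ℕ} (ρ : Measure (Fin d → ℝ)) (i : Fin d) (t : ℝ) : ℝ :=
  (ρ.map (fun x => x i) (Set.Iic t)).toReal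

/-- `ν` is the copula measure of the order transform `C_T` of the copula
with copula measure `μ`: Sklar's identity `H^C_T = C_T ∘ (marginals of H^C_T)`
holds, where `H^C_T` is the distribution function of the image of `μ` under
the sorting map. -/
def IsOrderTransform {d : ℕ} (μ ν : Measure (Fin d → ℝ)) : Prop :=
  IsCopulaMeasure ν ∧
    ∀ x : Fin d → ℝ,
      ((μ.map sortVec) {y | ∀ i, y i ≤ x i}).toReal
        = copulaFn ν (fun i => margCDF (μ.map sortVec) i (x i))

section SortAux

variable {d : ℕ}

lemma monotone_sortVec (x : Fin d → ℝ) : Monotone (sortVec x) :=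
  Tuple.monotone_sort x

lemma card_filter_sortVec (x : Fin d → ℝ) (t : ℝ) :
    (Finset.univ.filter fun j => sortVec x j ≤ t).card
      = (Finset.univ.filter fun j => x j ≤ t).card := by
  apply Finset.card_bij (fun j _ => Tuple.sort x j)
  · intro a ha
    simp only [Finset.mem_filter, Finset.mem_univ, true_and] at ha ⊢
    exact ha
  · intro a _ b _ h
    exact (Tuple.sort x).injective h
  · intro b hb
    refine ⟨(Tuple.sort x).symm b, ?_, by simp⟩
    simp only [Finset.mem_filter, Finset.mem_univ, true_and] at hb ⊢
    simpa [sortVec] using hb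

lemma monotone_le_iff_card {g : Fin d → ℝ} (hg : Monotone g) (i : Fin d) (t : ℝ) :
    g i ≤ t ↔ (i : ℕ) + 1 ≤ (Finset.univ.filter fun j => g j ≤ t).card := by
  constructor
  · intro h
    have hsub : Finset.Iic i ⊆ Finset.univ.filter fun j => g j ≤ t := by
      intro j hj
      simp only [Finset.mem_Iic] at hj
      simp only [Finset.mem_filter, Finset.mem_univ, true_and]
      exact le_trans (hg hj) h
    calc (i : ℕ) + 1 = (Finset.Iic i).card := (Fin.card_Iic i).symm
    _ ≤ _ := Finset.card_le_card hsub
  · intro h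
    by_contra hgi
    push_neg at hgi
    have hsub : (Finset.univ.filter fun j => g j ≤ t) ⊆ Finset.Iio i := by
      intro j hj
      simp only [Finset.mem_filter, Finset.mem_univ, true_and] at hj
      simp only [Finset.mem_Iio]
      by_contra hij
      push_neg at hij
      exact absurd (le_trans (hg hij) hj) (not_le.mpr hgi)
    have := Finset.card_le_card hsub
    rw [Fin.card_Iio] at this
    omega

lemma sortVec_le_iff (x : Fin d → ℝ) (i : Fin d) (t : ℝ) :
    sortVec x i ≤ t ↔ (i : ℕ) + 1 ≤ (Finset.univ.filter fun j => x j ≤ t).card := by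
  rw [monotone_le_iff_card (monotone_sortVec x) i t, card_filter_sortVec]

lemma sortVec_mono {x u : Fin d → ℝ} (h : ∀ i, x i ≤ u i) (i : Fin d) :
    sortVec x i ≤ sortVec u i := by
  rw [sortVec_le_iff]
  refine le_trans ((sortVec_le_iff u i (sortVec u i)).mp le_rfl) ?_
  apply Finset.card_le_card
  intro j hj
  simp only [Finset.mem_filter, Finset.mem_univ, true_and] at hj ⊢
  exact le_trans (h j) hj

lemma measurable_sortVec : Measurable (sortVec (d := d)) := by
  apply measurable_pi_lambda
  intro i
  apply measurable_of_Iic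
  intro t
  have : (fun x => sortVec x i) ⁻¹' Iic t
      = ⋃ (s : Finset (Fin d)), ⋃ (_ : s.card = (i : ℕ) + 1), {x : Fin d → ℝ | ∀ j ∈ s, x j ≤ t} := by
    ext x
    simp only [mem_preimage, mem_Iic, mem_iUnion, mem_setOf_eq, sortVec_le_iff]
    constructor
    · intro h
      obtain ⟨s, hs, hcard⟩ := Finset.exists_subset_card_eq h
      exact ⟨s, hcard, fun j hj => by
        have := hs hj
        simp only [Finset.mem_filter, Finset.mem_univ, true_and] at this
        exact this⟩
    · rintro ⟨s, hcard, hs⟩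
      calc (i : ℕ) + 1 = s.card := hcard.symm
      _ ≤ _ := Finset.card_le_card (fun j hj => by
        simp only [Finset.mem_filter, Finset.mem_univ, true_and]
        exact hs j hj)
  rw [this]
  apply MeasurableSet.iUnion
  intro s
  apply MeasurableSet.iUnion
  intro _
  have : {x : Fin d → ℝ | ∀ j ∈ s, x j ≤ t} = ⋂ j ∈ s, {x : Fin d → ℝ | x j ≤ t} := by
    ext x; simp
  rw [this]
  exact MeasurableSet.biInter (Set.to_countable _)
    (fun j _ => measurableSet_le (measurable_pi_apply j) measurable_const)

end SortAux

section CDFAux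

variable (m : Measure ℝ) [IsProbabilityMeasure m]

lemma cdf_mono : Monotone (fun t => (m (Iic t)).toReal) := by
  intro s t hst
  exact ENNReal.toReal_mono (measure_ne_top m _) (measure_mono (Iic_subset_Iic.mpr hst))

lemma cdf_nonneg (t : ℝ) : 0 ≤ (m (Iic t)).toReal := ENNReal.toReal_nonneg

lemma cdf_le_one (t : ℝ) : (m (Iic t)).toReal ≤ 1 := by
  have := measure_mono (subset_univ (Iic t)) (μ := m)
  rw [measure_univ] at this
  exact le_trans (ENNReal.toReal_mono (by simp) this) (by simp)

lemma cdf_exists_lt {c : ℝ} (hc : 0 < c) : ∃ s : ℝ, (m (Iic s)).toReal < c := by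
  have hmono : Antitone (fun n : ℕ => Iic (-(n : ℝ))) := by
    intro a b hab y hy
    simp only [mem_Iic] at hy ⊢
    exact le_trans hy (by simp [Nat.cast_le.mpr hab])
  have hinter : (⋂ n : ℕ, Iic (-(n : ℝ))) = ∅ := by
    ext y
    simp only [mem_iInter, mem_Iic, mem_empty_iff_false, iff_false, not_forall, not_le]
    obtain ⟨n, hn⟩ := exists_nat_gt (-y)
    exact ⟨n, by linarith⟩
  have ht := tendsto_measure_iInter_atTop (μ := m)
    (fun n => measurableSet_Iic.nullMeasurableSet) hmono ⟨0, measure_ne_top m _⟩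
  rw [hinter, measure_empty] at ht
  have := ht.eventually_lt_const (show (0:ENNReal) < ENNReal.ofReal c by simp [hc])
  obtain ⟨n, hn⟩ := this.exists
  exact ⟨-(n : ℝ), ENNReal.toReal_lt_of_lt_ofReal hn⟩

lemma cdf_exists_gt {c : ℝ} (hc : c < 1) : ∃ n : ℕ, c < (m (Iic (n : ℝ))).toReal := by
  rcases lt_or_ge c 0 with h | h
  · exact ⟨0, lt_of_lt_of_le h (by simpa using cdf_nonneg m 0)⟩
  · have hmono : Monotone (fun n : ℕ => Iic ((n : ℝ))) := by
      intro a b hab y hy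
      simp only [mem_Iic] at hy ⊢
      exact le_trans hy (Nat.cast_le.mpr hab)
    have hunion : (⋃ n : ℕ, Iic ((n : ℝ))) = univ := by
      ext y
      simp only [mem_iUnion, mem_Iic, mem_univ, iff_true]
      obtain ⟨n, hn⟩ := exists_nat_gt y
      exact ⟨n, hn.le⟩
    have ht := tendsto_measure_iUnion_atTop (μ := m) hmono
    rw [hunion, measure_univ] at ht
    have := ht.eventually_const_lt (show ENNReal.ofReal c < 1 by
      rw [ENNReal.ofReal_lt_one]; exact hc)
    obtain ⟨n, hn⟩ := this.exists
    exact ⟨n, (ENNReal.ofReal_lt_iff_lt_toReal h (measure_ne_top m _)).mp hn⟩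

lemma cdf_left_closed (hatom : ∀ t : ℝ, m {t} = 0) {c t : ℝ} (hc : 0 ≤ c)
    (h : ∀ s < t, (m (Iic s)).toReal ≤ c) : (m (Iic t)).toReal ≤ c := by
  have hIic : m (Iic t) ≤ m (Iio t) := by
    calc m (Iic t) = m (Iio t ∪ {t}) := by rw [Iio_union_right]
    _ ≤ m (Iio t) + m {t} := measure_union_le _ _
    _ = m (Iio t) := by rw [hatom, add_zero]
  have hunion : (⋃ n : ℕ, Iic (t - 1 / (n + 1))) = Iio t := by
    ext y
    simp only [mem_iUnion, mem_Iic, mem_Iio]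
    constructor
    · rintro ⟨n, hn⟩
      have : (0:ℝ) < 1 / (n + 1) := by positivity
      linarith
    · intro hy
      obtain ⟨n, hn⟩ := exists_nat_one_div_lt (show (0:ℝ) < t - y by linarith)
      exact ⟨n, by push_cast at hn ⊢; linarith⟩
  have hmono : Monotone (fun n : ℕ => Iic (t - 1 / ((n : ℝ) + 1))) := by
    intro a b hab y hy
    simp only [mem_Iic] at hy ⊢
    have hab' : (a : ℝ) + 1 ≤ (b : ℝ) + 1 := by
      have := (Nat.cast_le (α := ℝ)).mpr hab; linarith
    have : 1 / ((b : ℝ) + 1) ≤ 1 / ((a : ℝ) + 1) :=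
      one_div_le_one_div_of_le (by positivity) hab'
    linarith
  have ht := tendsto_measure_iUnion_atTop (μ := m) hmono
  rw [hunion] at ht
  have hbound : ∀ n : ℕ, m (Iic (t - 1 / ((n : ℝ) + 1))) ≤ ENNReal.ofReal c := by
    intro n
    rw [ENNReal.le_ofReal_iff_toReal_le (measure_ne_top m _) hc]
    apply h
    have : (0:ℝ) < 1 / ((n : ℝ) + 1) := by positivity
    linarith
  have hlim : m (Iio t) ≤ ENNReal.ofReal c := le_of_tendsto' ht hbound
  exact ENNReal.toReal_le_of_le_ofReal hc (le_trans hIic hlim)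

lemma cdf_right_cont {c t : ℝ} (h : (m (Iic t)).toReal < c) :
    ∃ s, t < s ∧ (m (Iic s)).toReal ≤ c := by
  have h1 : m (Iic t) < ENNReal.ofReal c :=
    (ENNReal.lt_ofReal_iff_toReal_lt (measure_ne_top m _)).mpr h
  have hinter : (⋂ n : ℕ, Iic (t + 1 / ((n : ℝ) + 1))) = Iic t := by
    ext y
    simp only [mem_iInter, mem_Iic]
    constructor
    · intro hy
      by_contra hyt
      push_neg at hyt
      obtain ⟨n, hn⟩ := exists_nat_one_div_lt (show (0:ℝ) < y - t by linarith)
      have := hy n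
      push_cast at hn this
      linarith
    · intro hy n
      have : (0:ℝ) < 1 / ((n : ℝ) + 1) := by positivity
      linarith
  have hanti : Antitone (fun n : ℕ => Iic (t + 1 / ((n : ℝ) + 1))) := by
    intro a b hab y hy
    simp only [mem_Iic] at hy ⊢
    have hab' : ((a : ℝ)) + 1 ≤ ((b : ℝ)) + 1 := by
      have := (Nat.cast_le (α := ℝ)).mpr hab; linarith
    have : 1 / ((b : ℝ) + 1) ≤ 1 / ((a : ℝ) + 1) :=
      one_div_le_one_div_of_le (by positivity) hab'
    linarith
  have ht := tendsto_measure_iInter_atTop (μ := m)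
    (fun n => measurableSet_Iic.nullMeasurableSet) hanti ⟨0, measure_ne_top m _⟩
  rw [hinter] at ht
  obtain ⟨n, hn⟩ := (ht.eventually_lt_const h1).exists
  refine ⟨t + 1 / ((n : ℝ) + 1), ?_, le_of_lt (ENNReal.toReal_lt_of_lt_ofReal hn)⟩
  have : (0:ℝ) < 1 / ((n : ℝ) + 1) := by positivity
  linarith

lemma cdf_level_set (hatom : ∀ t : ℝ, m {t} = 0) {c : ℝ} (hc0 : 0 ≤ c) (hc1 : c < 1)
    (hne : ∃ s, (m (Iic s)).toReal ≤ c) :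
    ∃ t : ℝ, (m (Iic t)).toReal = c ∧ ∀ s, (m (Iic s)).toReal ≤ c ↔ s ≤ t := by
  set A := {s : ℝ | (m (Iic s)).toReal ≤ c} with hA
  have hbdd : BddAbove A := by
    obtain ⟨n, hn⟩ := cdf_exists_gt m hc1
    refine ⟨n, fun s hs => ?_⟩
    by_contra hsn
    push_neg at hsn
    exact absurd (le_trans (cdf_mono m hsn.le) hs) (not_le.mpr hn)
  set t := sSup A with htdef
  have hub : ∀ s ∈ A, s ≤ t := fun s hs => le_csSup hbdd hs
  have htle : (m (Iic t)).toReal ≤ c := by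
    apply cdf_left_closed m hatom hc0
    intro s hs
    obtain ⟨a, ha, hsa⟩ := exists_lt_of_lt_csSup hne hs
    exact le_trans (cdf_mono m hsa.le) ha
  have hteq : (m (Iic t)).toReal = c := by
    by_contra hne'
    have hlt : (m (Iic t)).toReal < c := lt_of_le_of_ne htle hne'
    obtain ⟨s, hts, hsc⟩ := cdf_right_cont m hlt
    exact absurd (hub s hsc) (not_le.mpr hts)
  refine ⟨t, hteq, fun s => ⟨fun hs => hub s hs, fun hs => ?_⟩⟩
  calc (m (Iic s)).toReal ≤ (m (Iic t)).toReal := cdf_mono m hs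
  _ = c := hteq

end CDFAux

section MeasAux

variable {d : ℕ}

lemma measurable_copulaFn (κ : Measure (Fin d → ℝ)) [SFinite κ] :
    Measurable (copulaFn κ) := by
  have hs : MeasurableSet {p : (Fin d → ℝ) × (Fin d → ℝ) | ∀ i, p.2 i ≤ p.1 i} := by
    rw [Set.setOf_forall]
    exact MeasurableSet.iInter fun i =>
      measurableSet_le (measurable_snd.eval) (measurable_fst.eval)
  exact (measurable_measure_prodMk_left hs).ennreal_toReal

lemma copulaFn_nonneg (κ : Measure (Fin d → ℝ)) (u : Fin d → ℝ) : 0 ≤ copulaFn κ u :=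
  ENNReal.toReal_nonneg

lemma copulaFn_le_one (κ : Measure (Fin d → ℝ)) [IsProbabilityMeasure κ] (u : Fin d → ℝ) :
    copulaFn κ u ≤ 1 := by
  have h := measure_mono (subset_univ {x : Fin d → ℝ | ∀ i, x i ≤ u i}) (μ := κ)
  rw [measure_univ] at h
  exact le_trans (ENNReal.toReal_mono (by simp) h) (by simp)

lemma integrable_copula_bdd {α : Type*} [MeasurableSpace α] (m : Measure α)
    [IsFiniteMeasure m] {f : α → ℝ} (hf : AEStronglyMeasurable f m)
    (h0 : ∀ x, 0 ≤ f x) (h1 : ∀ x, f x ≤ 1) : Integrable f m := by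
  refine ⟨hf, ?_⟩
  apply HasFiniteIntegral.of_bounded (C := 1)
  filter_upwards with x
  rw [Real.norm_eq_abs, abs_of_nonneg (h0 x)]
  exact h1 x

lemma marg_null {m : Measure (Fin d → ℝ)}
    (hm : ∀ i, m.map (fun x => x i) = volume.restrict (Set.Icc 0 1)) (i : Fin d)
    {s : Set ℝ} (hs : MeasurableSet s) (h0 : volume (s ∩ Set.Icc 0 1) = 0) :
    m ((fun x => x i) ⁻¹' s) = 0 := by
  calc m ((fun x => x i) ⁻¹' s) = (m.map (fun x => x i)) s :=
        (Measure.map_apply (measurable_pi_apply i) hs).symm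
  _ = volume (s ∩ Set.Icc 0 1) := by rw [hm i, Measure.restrict_apply hs]
  _ = 0 := h0

lemma orth_measurable (a : Fin d → ℝ) : MeasurableSet {y : Fin d → ℝ | ∀ i, y i ≤ a i} := by
  rw [Set.setOf_forall]
  exact MeasurableSet.iInter fun i => measurableSet_le (measurable_pi_apply i) measurable_const

end MeasAux

lemma key_cdf {d : ℕ} (hd : 2 ≤ d) (ρ ν : Measure (Fin d → ℝ))
    [IsProbabilityMeasure ρ] [IsProbabilityMeasure ν]
    (hatom : ∀ (i : Fin d) (t : ℝ), ρ ((fun x => x i) ⁻¹' {t}) = 0)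
    (hνm : ∀ i, ν.map (fun x => x i) = volume.restrict (Set.Icc 0 1))
    (hsk : ∀ x : Fin d → ℝ,
      (ρ {y | ∀ i, y i ≤ x i}).toReal = copulaFn ν (fun i => margCDF ρ i (x i)))
    (a : Fin d → ℝ) :
    ρ {x | ∀ i, margCDF ρ i (x i) ≤ a i} = ν {v | ∀ i, v i ≤ a i} := by
  have hPi : ∀ i, IsProbabilityMeasure (ρ.map (fun x : Fin d → ℝ => x i)) := fun i =>
    Measure.isProbabilityMeasure_map (measurable_pi_apply i).aemeasurable
  have hat' : ∀ (i : Fin d) (t : ℝ), (ρ.map (fun x : Fin d → ℝ => x i)) {t} = 0 := by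
    intro i t
    rw [Measure.map_apply (measurable_pi_apply i) (measurableSet_singleton t)]
    exact hatom i t
  have hFmono : ∀ i, Monotone (margCDF ρ i) := fun i => by
    haveI := hPi i; exact cdf_mono (ρ.map (fun x : Fin d → ℝ => x i))
  have hF0 : ∀ i t, 0 ≤ margCDF ρ i t := fun i t => cdf_nonneg _ t
  have hF1 : ∀ i t, margCDF ρ i t ≤ 1 := fun i t => by
    haveI := hPi i; exact cdf_le_one (ρ.map (fun x : Fin d → ℝ => x i)) t
  -- null sets for ν
  have hν0 : ∀ i : Fin d, ν ((fun v : Fin d → ℝ => v i) ⁻¹' Iic 0) = 0 := by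
    intro i
    apply marg_null hνm i measurableSet_Iic
    apply measure_mono_null (t := {(0:ℝ)})
    · rintro x ⟨hx1, hx2, _⟩
      exact le_antisymm hx1 hx2
    · exact Real.volume_singleton
  have hν1 : ∀ i : Fin d, ν ((fun v : Fin d → ℝ => v i) ⁻¹' Ici 1) = 0 := by
    intro i
    apply marg_null hνm i measurableSet_Ici
    apply measure_mono_null (t := {(1:ℝ)})
    · rintro x ⟨hx1, _, hx2⟩
      exact le_antisymm hx2 hx1
    · exact Real.volume_singleton
  have hnull : ν (⋃ i, (fun v : Fin d → ℝ => v i) ⁻¹' Ici 1) = 0 :=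
    le_antisymm (le_trans (measure_iUnion_le _) (by simp [hν1])) zero_le
  have hleν : ∀ A B : Set (Fin d → ℝ),
      A ⊆ B ∪ (⋃ i, (fun v : Fin d → ℝ => v i) ⁻¹' Ici 1) → ν A ≤ ν B := by
    intro A B h
    calc ν A ≤ ν (B ∪ (⋃ i, (fun v : Fin d → ℝ => v i) ⁻¹' Ici 1)) := measure_mono h
    _ ≤ ν B + ν (⋃ i, (fun v : Fin d → ℝ => v i) ⁻¹' Ici 1) := measure_union_le _ _
    _ = ν B := by rw [hnull, add_zero]
  by_cases hA : ∀ i, ∃ s, margCDF ρ i s ≤ a i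
  · -- main case
    have ha0 : ∀ i, 0 ≤ a i := fun i => le_trans (hF0 i (hA i).choose) (hA i).choose_spec
    have hti : ∀ i, ∃ t, a i < 1 → (margCDF ρ i t = a i ∧ ∀ s, margCDF ρ i s ≤ a i ↔ s ≤ t) := by
      intro i
      by_cases h : a i < 1
      · haveI := hPi i
        obtain ⟨t, ht1, ht2⟩ := cdf_level_set (ρ.map (fun x : Fin d → ℝ => x i)) (hat' i) (ha0 i) h (hA i)
        exact ⟨t, fun _ => ⟨ht1, ht2⟩⟩
      · exact ⟨0, fun h' => absurd h' h⟩
    choose T hT using hti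
    have hset : {x : Fin d → ℝ | ∀ i, margCDF ρ i (x i) ≤ a i}
        = {x : Fin d → ℝ | ∀ i, a i < 1 → x i ≤ T i} := by
      ext x
      simp only [mem_setOf_eq]
      constructor
      · intro hx i hi
        exact ((hT i hi).2 (x i)).mp (hx i)
      · intro hx i
        by_cases hi : a i < 1
        · exact ((hT i hi).2 (x i)).mpr (hx i hi)
        · exact le_trans (hF1 i (x i)) (not_lt.mp hi)
    set xn : ℕ → Fin d → ℝ := fun n i => if a i < 1 then T i else n with hxndef
    set vn : ℕ → Fin d → ℝ := fun n i => if a i < 1 then a i else margCDF ρ i n with hvndef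
    -- ρ side
    have hmonoR : Monotone (fun n => {y : Fin d → ℝ | ∀ i, y i ≤ xn n i}) := by
      intro n m hnm y hy i
      by_cases hi : a i < 1
      · simpa [hxndef, hi] using (by simpa [hxndef, hi] using hy i : y i ≤ T i)
      · have := hy i
        simp only [hxndef, hi, if_false] at this ⊢
        exact le_trans this (Nat.cast_le.mpr hnm)
    have hUR : (⋃ n, {y : Fin d → ℝ | ∀ i, y i ≤ xn n i})
        = {x : Fin d → ℝ | ∀ i, a i < 1 → x i ≤ T i} := by
      ext y
      simp only [mem_iUnion, mem_setOf_eq]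
      constructor
      · rintro ⟨n, hn⟩ i hi
        simpa [hxndef, hi] using hn i
      · intro hy
        have hne : (Finset.univ : Finset (Fin d)).Nonempty :=
          ⟨⟨0, by omega⟩, Finset.mem_univ _⟩
        obtain ⟨n, hn⟩ := exists_nat_ge (Finset.univ.sup' hne y)
        refine ⟨n, fun i => ?_⟩
        by_cases hi : a i < 1
        · simpa [hxndef, hi] using hy i hi
        · simp only [hxndef, hi, if_false]
          exact le_trans (Finset.le_sup' y (Finset.mem_univ i)) hn
    have htR := tendsto_measure_iUnion_atTop (μ := ρ)
      (s := fun n => {y : Fin d → ℝ | ∀ i, y i ≤ xn n i}) hmonoR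
    rw [hUR] at htR
    -- term equality
    have hterm : ∀ n, ρ {y : Fin d → ℝ | ∀ i, y i ≤ xn n i}
        = ν {v : Fin d → ℝ | ∀ i, v i ≤ vn n i} := by
      intro n
      have h1 := hsk (xn n)
      have h2 : (fun i => margCDF ρ i (xn n i)) = vn n := by
        funext i
        by_cases hi : a i < 1
        · simp only [hxndef, hvndef, hi, if_true]
          exact (hT i hi).1
        · simp only [hxndef, hvndef, hi, if_false]
      rw [h2] at h1
      exact (ENNReal.toReal_eq_toReal_iff' (measure_ne_top _ _) (measure_ne_top _ _)).mp h1
    -- ν side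
    have hmonoV : Monotone (fun n => {v : Fin d → ℝ | ∀ i, v i ≤ vn n i}) := by
      intro n m hnm v hv i
      by_cases hi : a i < 1
      · simpa [hvndef, hi] using (by simpa [hvndef, hi] using hv i : v i ≤ a i)
      · have := hv i
        simp only [hvndef, hi, if_false] at this ⊢
        exact le_trans this (hFmono i (Nat.cast_le.mpr hnm))
    have htV := tendsto_measure_iUnion_atTop (μ := ν)
      (s := fun n => {v : Fin d → ℝ | ∀ i, v i ≤ vn n i}) hmonoV
    have hUV : ν (⋃ n, {v : Fin d → ℝ | ∀ i, v i ≤ vn n i})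
        = ν {v : Fin d → ℝ | ∀ i, a i < 1 → v i ≤ a i} := by
      apply le_antisymm
      · apply measure_mono
        rintro v hv i hi
        obtain ⟨n, hn⟩ := mem_iUnion.mp hv
        simpa [hvndef, hi] using hn i
      · apply hleν
        intro v hv
        by_cases hvi : ∀ i, ¬ (a i < 1) → v i < 1
        · left
          have hNi : ∀ i, ∃ n : ℕ, ¬ (a i < 1) → v i ≤ margCDF ρ i n := by
            intro i
            by_cases h : a i < 1
            · exact ⟨0, fun h' => absurd h h'⟩
            · haveI := hPi i
              obtain ⟨n, hn⟩ := cdf_exists_gt (ρ.map (fun x : Fin d → ℝ => x i)) (hvi i h)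
              exact ⟨n, fun _ => le_of_lt hn⟩
          choose N hN using hNi
          refine mem_iUnion.mpr ⟨Finset.univ.sup N, fun i => ?_⟩
          by_cases hi : a i < 1
          · simpa [hvndef, hi] using hv i hi
          · simp only [hvndef, hi, if_false]
            exact le_trans (hN i hi)
              (hFmono i (Nat.cast_le.mpr (Finset.le_sup (Finset.mem_univ i))))
        · right
          push_neg at hvi
          obtain ⟨i, hi1, hi2⟩ := hvi
          exact mem_iUnion.mpr ⟨i, hi2⟩
    rw [hUV] at htV
    have hfun : (fun n => ρ {y : Fin d → ℝ | ∀ i, y i ≤ xn n i})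
        = fun n => ν {v : Fin d → ℝ | ∀ i, v i ≤ vn n i} := funext hterm
    have heq1 : ρ {x : Fin d → ℝ | ∀ i, a i < 1 → x i ≤ T i}
        = ν {v : Fin d → ℝ | ∀ i, a i < 1 → v i ≤ a i} := by
      apply tendsto_nhds_unique _ htV
      have : (ν ∘ fun n => {v : Fin d → ℝ | ∀ i, v i ≤ vn n i})
          = (ρ ∘ fun n => {y : Fin d → ℝ | ∀ i, y i ≤ xn n i}) := by
        funext n; exact (hterm n).symm
      rw [this]
      exact htR
    -- conclude
    have heq2 : ν {v : Fin d → ℝ | ∀ i, a i < 1 → v i ≤ a i}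
        = ν {v : Fin d → ℝ | ∀ i, v i ≤ a i} := by
      apply le_antisymm
      · apply hleν
        intro v hv
        by_cases hvi : ∀ i, ¬ (a i < 1) → v i < 1
        · left
          intro i
          by_cases hi : a i < 1
          · exact hv i hi
          · exact le_trans (le_of_lt (hvi i hi)) (not_lt.mp hi)
        · right
          push_neg at hvi
          obtain ⟨i, _, hi2⟩ := hvi
          exact mem_iUnion.mpr ⟨i, hi2⟩
      · exact measure_mono (fun v hv i _ => hv i)
    calc ρ {x : Fin d → ℝ | ∀ i, margCDF ρ i (x i) ≤ a i}
        = ρ {x : Fin d → ℝ | ∀ i, a i < 1 → x i ≤ T i} := by rw [← hset]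
    _ = ν {v : Fin d → ℝ | ∀ i, a i < 1 → v i ≤ a i} := heq1
    _ = ν {v : Fin d → ℝ | ∀ i, v i ≤ a i} := heq2
  · -- degenerate case
    push_neg at hA
    obtain ⟨i, hi⟩ := hA
    have hai : a i ≤ 0 := by
      by_contra h
      push_neg at h
      haveI := hPi i
      obtain ⟨s, hs⟩ := cdf_exists_lt (ρ.map (fun x : Fin d → ℝ => x i)) h
      exact absurd (le_of_lt hs) (not_le.mpr (hi s))
    have hL : ρ {x : Fin d → ℝ | ∀ j, margCDF ρ j (x j) ≤ a j} = 0 := by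
      have : {x : Fin d → ℝ | ∀ j, margCDF ρ j (x j) ≤ a j} = ∅ := by
        apply eq_empty_of_forall_notMem
        intro x hx
        exact absurd (hx i) (not_le.mpr (hi (x i)))
      rw [this, measure_empty]
    have hR : ν {v : Fin d → ℝ | ∀ j, v j ≤ a j} = 0 := by
      apply measure_mono_null (t := (fun v : Fin d → ℝ => v i) ⁻¹' Iic 0)
      · intro v hv
        exact le_trans (hv i) hai
      · exact hν0 i
    rw [hL, hR]


theorem stmt14 (d : ℕ) (hd : 2 ≤ d) (μ ν : Measure (Fin d → ℝ))
    (hμ : IsCopulaMeasure μ) (hν : IsOrderTransform μ ν) :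
    (2 ^ d * ∫ u, copulaFn μ u ∂μ - 1) / (2 ^ (d - 1) - 1)
      ≤ (2 ^ d * ∫ u, copulaFn ν u ∂ν - 1) / (2 ^ (d - 1) - 1) := by
  obtain ⟨hμP, hμm⟩ := hμ
  obtain ⟨⟨hνP, hνm⟩, hsk⟩ := hν
  haveI := hμP
  haveI := hνP
  have hsm : Measurable (sortVec (d := d)) := measurable_sortVec
  set ρ : Measure (Fin d → ℝ) := μ.map sortVec with hρdef
  haveI hρP : IsProbabilityMeasure ρ := Measure.isProbabilityMeasure_map hsm.aemeasurable
  -- atomless marginals of ρ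
  have hatρ : ∀ (i : Fin d) (t : ℝ), ρ ((fun x : Fin d → ℝ => x i) ⁻¹' {t}) = 0 := by
    intro i t
    have hjnull : ∀ j : Fin d, μ ((fun x : Fin d → ℝ => x j) ⁻¹' {t}) = 0 := fun j =>
      marg_null hμm j (measurableSet_singleton t)
        (measure_mono_null inter_subset_left Real.volume_singleton)
    have hUnull : μ (⋃ j, (fun x : Fin d → ℝ => x j) ⁻¹' {t}) = 0 :=
      le_antisymm (le_trans (measure_iUnion_le _) (by simp [hjnull])) zero_le
    rw [hρdef, Measure.map_apply hsm ((measurable_pi_apply i) (measurableSet_singleton t))]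
    apply measure_mono_null _ hUnull
    intro x hx
    exact mem_iUnion.mpr ⟨Tuple.sort x i, hx⟩
  -- the key CDF identity
  have key := key_cdf hd ρ ν hatρ hνm hsk
  -- measurability of the marginal-CDF map
  have hFmono : ∀ i : Fin d, Monotone (fun t => margCDF ρ i t) := fun i => by
    haveI : IsProbabilityMeasure (ρ.map (fun x : Fin d → ℝ => x i)) :=
      Measure.isProbabilityMeasure_map (measurable_pi_apply i).aemeasurable
    exact cdf_mono (ρ.map (fun x : Fin d → ℝ => x i))
  have hFm : Measurable (fun x : Fin d → ℝ => fun i => margCDF ρ i (x i)) :=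
    measurable_pi_lambda _ fun i => ((hFmono i).measurable).comp (measurable_pi_apply i)
  haveI : IsProbabilityMeasure (ρ.map (fun x : Fin d → ℝ => fun i => margCDF ρ i (x i))) :=
    Measure.isProbabilityMeasure_map hFm.aemeasurable
  -- the pushforward of ρ under the marginal CDFs is ν
  have hπ : ρ.map (fun x : Fin d → ℝ => fun i => margCDF ρ i (x i)) = ν := by
    refine ext_of_generate_finite
      (Set.pi univ '' Set.pi univ (fun _ : Fin d => Set.range (Iic : ℝ → Set ℝ)))
      ?_ ?_ ?_ ?_
    · refine (generateFrom_eq_pi (fun _ => ?_) (fun _ => ?_)).symm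
      · exact ((BorelSpace.measurable_eq (α := ℝ)).trans (borel_eq_generateFrom_Iic ℝ)).symm
      · refine ⟨fun n => Iic (n : ℝ), fun n => ⟨n, rfl⟩, ?_⟩
        ext y
        simp only [mem_iUnion, mem_Iic, mem_univ, iff_true]
        exact exists_nat_ge y
    · apply IsPiSystem.pi
      intro i
      rintro s ⟨p, rfl⟩ t ⟨q, rfl⟩ _
      exact ⟨p ⊓ q, Iic_inter_Iic.symm⟩
    · rintro s ⟨t, ht, rfl⟩
      have hc : ∀ i, ∃ c : ℝ, t i = Iic c := fun i => by
        rcases ht i (mem_univ i) with ⟨c, hcc⟩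
        exact ⟨c, hcc.symm⟩
      choose c hcspec using hc
      have hset : univ.pi t = {v : Fin d → ℝ | ∀ i, v i ≤ c i} := by
        ext v
        simp only [Set.mem_pi, Set.mem_univ, true_implies, mem_setOf_eq]
        constructor
        · intro h i; have := h i; rw [hcspec i] at this; exact this
        · intro h i; rw [hcspec i]; exact h i
      rw [hset, Measure.map_apply hFm (orth_measurable c)]
      exact key c
    · simp [measure_univ]
  -- pointwise inequality
  have hpt : ∀ u, copulaFn μ u ≤ copulaFn ν (fun i => margCDF ρ i (sortVec u i)) := by
    intro u
    have h1 : μ {x : Fin d → ℝ | ∀ i, x i ≤ u i} ≤ ρ {y : Fin d → ℝ | ∀ i, y i ≤ sortVec u i} := by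
      rw [hρdef, Measure.map_apply hsm (orth_measurable (sortVec u))]
      apply measure_mono
      intro x hx i
      exact sortVec_mono hx i
    calc copulaFn μ u ≤ (ρ {y : Fin d → ℝ | ∀ i, y i ≤ sortVec u i}).toReal :=
          ENNReal.toReal_mono (measure_ne_top _ _) h1
    _ = copulaFn ν (fun i => margCDF ρ i (sortVec u i)) := hsk (sortVec u)
  -- integrability
  have hcopν : Measurable (copulaFn ν) := measurable_copulaFn ν
  have hint1 : Integrable (copulaFn μ) μ :=
    integrable_copula_bdd μ (measurable_copulaFn μ).aestronglyMeasurable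
      (copulaFn_nonneg μ) (copulaFn_le_one μ)
  have hint2 : Integrable (fun u => copulaFn ν (fun i => margCDF ρ i (sortVec u i))) μ :=
    integrable_copula_bdd μ
      ((hcopν.comp (hFm.comp hsm)).aestronglyMeasurable)
      (fun u => copulaFn_nonneg ν _) (fun u => copulaFn_le_one ν _)
  have hmain : ∫ u, copulaFn μ u ∂μ ≤ ∫ u, copulaFn ν u ∂ν := by
    have hmap : μ.map ((fun x : Fin d → ℝ => fun i => margCDF ρ i (x i)) ∘ sortVec) = ν := by
      rw [← Measure.map_map hFm hsm, ← hρdef, hπ]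
    calc ∫ u, copulaFn μ u ∂μ
        ≤ ∫ u, copulaFn ν (fun i => margCDF ρ i (sortVec u i)) ∂μ :=
          integral_mono hint1 hint2 hpt
    _ = ∫ u, copulaFn ν (((fun x : Fin d → ℝ => fun i => margCDF ρ i (x i)) ∘ sortVec) u) ∂μ := rfl
    _ = ∫ v, copulaFn ν v ∂(μ.map ((fun x : Fin d → ℝ => fun i => margCDF ρ i (x i)) ∘ sortVec)) :=
          (integral_map (hFm.comp hsm).aemeasurable hcopν.aestronglyMeasurable).symm
    _ = ∫ v, copulaFn ν v ∂ν := by rw [hmap]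
  have hden : (0:ℝ) < 2 ^ (d - 1) - 1 := by
    have h1 : (2:ℝ) ^ 1 ≤ 2 ^ (d - 1) := by
      apply pow_le_pow_right₀ one_le_two
      omega
    norm_num at h1
    linarith
  rw [div_le_div_iff_of_pos_right hden]
  have h2d : (0:ℝ) ≤ 2 ^ d := by positivity
  nlinarith [hmain]
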